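/- Fix ε ∈ (0,1] with εn an integer, columns a^1,…,a^n ∈ [0,1]^m, budget B > 0, and an index i ∈ {1,…,m}. Let w ⊆ {1,…,n} satisfy a_i(w) ≥ (1 − ε/2)B, and let S be a uniformly random εn-element subset of {1,…,n}. Then Pr[ a_i^S(w) ≤ (1 − ε)B ] ≤ 2·exp(−ε³B/33). -/

import Mathlib

open Finset

/-- Occupation of row `i` by the index set `w`. -/
def occ {n m : ℕ} (a : Fin n → Fin m → ℝ) (i : Fin m) (w : Finset (Fin n)) : ℝ :=
  ∑ t ∈ w, a t i

/-- Bernoulli-type step lemma. -/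
lemma bern_aux (a e : ℝ) (k : ℕ) (ha : 0 ≤ a) (hae : 0 ≤ a + e) :
    a ^ k * (a + (k + 1) * e) ≤ (a + e) ^ (k + 1) := by
  rcases ha.eq_or_lt with h | h
  · cases k with
    | zero => simp [← h]
    | succ k =>
      rw [← h] at hae ⊢
      simp only [zero_pow (Nat.succ_ne_zero k), zero_mul]
      exact pow_nonneg hae _
  · have ha' : (0:ℝ) < a := h
    have he : (-2 : ℝ) ≤ e / a := by
      rw [le_div_iff₀ ha']
      nlinarith
    have h1 := one_add_mul_le_pow he (k + 1)
    have h2 : a ^ (k+1) * (1 + (↑(k+1):ℝ) * (e / a)) ≤ a ^ (k+1) * (1 + e / a) ^ (k + 1) :=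
      mul_le_mul_of_nonneg_left h1 (pow_nonneg ha'.le _)
    calc a ^ k * (a + (k + 1) * e) = a ^ (k+1) * (1 + (↑(k+1):ℝ) * (e / a)) := by
          field_simp; push_cast; ring
      _ ≤ a ^ (k+1) * (1 + e / a) ^ (k + 1) := h2
      _ = (a + e) ^ (k + 1) := by
          rw [← mul_pow]; congr 1; field_simp

/-- Averaged Maclaurin inequality. -/
lemma maclaurin {ι : Type*} [DecidableEq ι] (F : Finset ι) (f : ι → ℝ) :
    ∀ (k : ℕ), (∀ t ∈ F, 0 ≤ f t) →
    ∑ S ∈ F.powersetCard k, ∏ t ∈ S, f t ≤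
      (F.card.choose k : ℝ) * ((∑ t ∈ F, f t) / F.card) ^ k := by
  induction F using Finset.induction_on with
  | empty =>
    intro k _
    cases k with
    | zero => simp
    | succ k =>
      rw [Finset.powersetCard_eq_empty.2 (by simp)]
      simp
  | @insert x F' hx ih =>
    intro k hf
    have hfx : 0 ≤ f x := hf x (mem_insert_self _ _)
    have hf' : ∀ t ∈ F', 0 ≤ f t := fun t ht => hf t (mem_insert_of_mem ht)
    have hS0 : 0 ≤ ∑ t ∈ F', f t := Finset.sum_nonneg hf'
    cases k with
    | zero => simp
    | succ k =>
      rw [Finset.card_insert_of_notMem hx, Finset.sum_insert hx]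
      by_cases hkN : k ≤ F'.card
      · -- main case
        rw [powersetCard_succ_insert hx, Finset.sum_union, Finset.sum_image]
        · -- the value computation on the image
          have himg : ∑ S ∈ F'.powersetCard k, ∏ t ∈ insert x S, f t
              = f x * ∑ S ∈ F'.powersetCard k, ∏ t ∈ S, f t := by
            rw [Finset.mul_sum]
            refine Finset.sum_congr rfl fun S hS => ?_
            have hxS : x ∉ S := fun hmem =>
              hx ((Finset.mem_powersetCard.1 hS).1 hmem)
            rw [Finset.prod_insert hxS]
          rw [himg]
          have hcard : ((F'.card : ℝ)) * ((∑ t ∈ F', f t) / F'.card) = ∑ t ∈ F', f t := by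
            rcases Nat.eq_zero_or_pos F'.card with h0 | hpos
            · have hF : F' = ∅ := Finset.card_eq_zero.1 h0
              subst hF; simp
            · have : (F'.card : ℝ) ≠ 0 := by positivity
              field_simp
          set N' : ℕ := F'.card with hN'
          set Sf : ℝ := ∑ t ∈ F', f t with hSf
          set m' : ℝ := Sf / N' with hm'def
          set ee : ℝ := (f x - m') / (N' + 1) with hee
          set mm : ℝ := (f x + Sf) / ((N' : ℝ) + 1) with hmm
          have hNpos : (0:ℝ) < (N' : ℝ) + 1 := by positivity
          have hm'0 : 0 ≤ m' := div_nonneg hS0 (Nat.cast_nonneg _)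
          have hSm : Sf = (N' : ℝ) * m' := hcard.symm
          have hme : mm = m' + ee := by
            rw [hmm, hee, hSm]; field_simp; ring
          have hmm0 : 0 ≤ mm := by
            rw [hmm]; positivity
          have hc1 : (N'.choose (k+1) : ℝ) = ((N'+1).choose (k+1) : ℝ) - (N'.choose k : ℝ) := by
            have h : (N'+1).choose (k+1) = N'.choose k + N'.choose (k+1) :=
              Nat.choose_succ_succ N' k
            have h2 : (((N'+1).choose (k+1) : ℕ) : ℝ)
                = (N'.choose k : ℝ) + (N'.choose (k+1) : ℝ) := by exact_mod_cast h
            linarith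
          have hc2 : ((N':ℝ)+1) * (N'.choose k : ℝ) = ((k:ℝ)+1) * ((N'+1).choose (k+1) : ℝ) := by
            have h := Nat.add_one_mul_choose_eq N' k
            have h' : ((N' + 1) * N'.choose k : ℕ) = ((N'+1).choose (k+1) * (k+1) : ℕ) := h
            have h'' : ((N':ℝ)+1) * (N'.choose k : ℝ)
                = ((N'+1).choose (k+1) : ℝ) * ((k:ℝ)+1) := by exact_mod_cast h'
            linarith
          have he2 : ((N':ℝ)+1) * ee = f x - m' := by
            rw [hee]; field_simp
          have hb := bern_aux m' ee k hm'0 (hme ▸ hmm0)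
          have hcast : ((N' + 1 : ℕ) : ℝ) = (N' : ℝ) + 1 := by push_cast; ring
          rw [hcast]
          clear hm'def hee hSf hcard hSm
          clear_value m' ee mm Sf
          calc (∑ S ∈ F'.powersetCard (k+1), ∏ t ∈ S, f t)
                + f x * ∑ S ∈ F'.powersetCard k, ∏ t ∈ S, f t
              ≤ (N'.choose (k+1) : ℝ) * m' ^ (k+1)
                + f x * ((N'.choose k : ℝ) * m' ^ k) :=
                add_le_add (ih (k+1) hf') (mul_le_mul_of_nonneg_left (ih k hf') hfx)
            _ = ((N'+1).choose (k+1) : ℝ) * (m' ^ k * (m' + ((k:ℝ)+1) * ee)) := by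
                linear_combination m' ^ (k+1) * hc1 + ee * m' ^ k * hc2
                  - ((N'.choose k : ℝ) * m' ^ k) * he2
            _ ≤ ((N'+1).choose (k+1) : ℝ) * mm ^ (k+1) := by
                have hC : (0:ℝ) ≤ ((N'+1).choose (k+1) : ℝ) := Nat.cast_nonneg _
                have hbb : m' ^ k * (m' + ((k:ℝ)+1) * ee) ≤ mm ^ (k+1) := by
                  rw [hme]; exact_mod_cast hb
                exact mul_le_mul_of_nonneg_left hbb hC
            _ = ((N'+1).choose (k+1) : ℝ) * ((f x + Sf) / ((N':ℝ)+1)) ^ (k+1) := by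
                rw [hmm]
        · -- injectivity of insert on powersetCard
          intro S hS T hT hST
          have hxS : x ∉ S := fun hmem => hx ((Finset.mem_powersetCard.1 hS).1 hmem)
          have hxT : x ∉ T := fun hmem => hx ((Finset.mem_powersetCard.1 hT).1 hmem)
          have := congrArg (fun U => Finset.erase U x) hST
          simpa [Finset.erase_insert hxS, Finset.erase_insert hxT] using this
        · -- disjointness
          rw [Finset.disjoint_left]
          intro S hS hS'
          obtain ⟨T, hT, rfl⟩ := Finset.mem_image.1 hS'
          exact hx ((Finset.mem_powersetCard.1 hS).1 (Finset.mem_insert_self x T))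
      · -- degenerate case : k+1 > card (insert x F')
        have hlt : (insert x F').card < k + 1 := by
          rw [Finset.card_insert_of_notMem hx]; omega
        rw [Finset.powersetCard_eq_empty.2 hlt]
        rw [Finset.card_insert_of_notMem hx] at hlt
        rw [Nat.choose_eq_zero_of_lt (by omega)]
        simp

set_option maxHeartbeats 1000000 in
/-- Concentration bound for a single witness: if `a_i(w) ≥ (1 − ε/2)B` then the
scaled sampled occupation `a_i^S(w)` falls below `(1−ε)B` with probability at
most `2·exp(−ε³B/33)` over a uniformly random `εn`-element sample `S`. -/
theorem witness_concentration
    (n m : ℕ) (hm : 1 ≤ m)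
    (ε : ℝ) (hε : ε ∈ Set.Ioc (0:ℝ) 1)
    (k : ℕ) (hk : (k : ℝ) = ε * n)
    (a : Fin n → Fin m → ℝ) (ha : ∀ t i, a t i ∈ Set.Icc (0:ℝ) 1)
    (B : ℝ) (hB : 0 < B)
    (i : Fin m) (w : Finset (Fin n))
    (hw : (1 - ε / 2) * B ≤ occ a i w) :
    ((((Finset.univ : Finset (Fin n)).powersetCard k).filter
        (fun S => (1 / ε) * occ a i (w ∩ S) ≤ (1 - ε) * B)).card : ℝ) /
      ((((Finset.univ : Finset (Fin n)).powersetCard k).card : ℝ)) ≤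
      2 * Real.exp (-(ε ^ 3 * B / 33)) := by
  obtain ⟨hε0, hε1⟩ := hε
  have ha0 : ∀ t, 0 ≤ a t i := fun t => (ha t i).1
  have ha1 : ∀ t, a t i ≤ 1 := fun t => (ha t i).2
  have hocc0 : 0 < occ a i w := lt_of_lt_of_le (by nlinarith) hw
  have hoccw_card : occ a i w ≤ (w.card : ℝ) := by
    unfold occ
    calc ∑ t ∈ w, a t i ≤ ∑ t ∈ w, (1:ℝ) := Finset.sum_le_sum (fun t _ => ha1 t)
      _ = (w.card : ℝ) := by simp
  have hcardn : ((w.card : ℕ) : ℝ) ≤ (n : ℝ) := by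
    have h2 : w.card ≤ n := by simpa using Finset.card_le_univ w
    exact_mod_cast h2
  have hn0 : (0:ℝ) < n := lt_of_lt_of_le hocc0 (hoccw_card.trans hcardn)
  have hkn : k ≤ n := by
    have : (k:ℝ) ≤ (n:ℝ) := by rw [hk]; nlinarith
    exact_mod_cast this
  set O : ℝ := occ a i w with hO
  set μ : ℝ := ε * O with hμdef
  set θ : ℝ := ε * ((1 - ε) * B) with hθdef
  have hμ : 0 < μ := by positivity
  have hμθ : 0 < μ - θ := by
    rw [hμdef, hθdef]
    nlinarith [mul_le_mul_of_nonneg_left hw hε0.le, mul_pos (mul_pos hε0 hε0) hB]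
  set L : ℝ := (μ - θ) / (2 * μ) with hLdef
  have hL0 : 0 < L := by positivity
  have hexpL1 : Real.exp (-L) < 1 := by
    have : Real.exp (-L) < Real.exp 0 := Real.exp_lt_exp.2 (by linarith)
    simpa using this
  set c : ℝ := 1 - Real.exp (-L) with hcdef
  have hc0 : 0 < c := by rw [hcdef]; linarith
  -- the auxiliary weight function
  set g : Fin n → ℝ := fun t => if t ∈ w then Real.exp (-(L * a t i)) else 1 with hg
  have hg0 : ∀ t, 0 ≤ g t := by
    intro t; rw [hg]; dsimp only
    split
    · exact (Real.exp_pos _).le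
    · exact zero_le_one
  have hprod : ∀ S : Finset (Fin n), ∏ t ∈ S, g t
      = Real.exp (-(L * occ a i (w ∩ S))) := by
    intro S
    rw [hg]
    rw [Finset.prod_ite_mem S w (fun t => Real.exp (-(L * a t i)))]
    rw [← Real.exp_sum]
    congr 1
    rw [Finset.inter_comm]
    unfold occ
    rw [Finset.mul_sum, ← Finset.sum_neg_distrib]
  -- pointwise convexity bound
  have hpt : ∀ t ∈ w, Real.exp (-(L * a t i)) ≤ 1 - a t i * c := by
    intro t _
    have hcvx := convexOn_exp.2 (Set.mem_univ (0:ℝ)) (Set.mem_univ (-L))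
      (by linarith [ha1 t] : (0:ℝ) ≤ 1 - a t i) (ha0 t) (by ring)
    simp only [smul_eq_mul, mul_zero, zero_add, Real.exp_zero, mul_one] at hcvx
    have h1 : a t i * (-L) = -(L * a t i) := by ring
    rw [h1] at hcvx
    rw [hcdef]; nlinarith [hcvx]
  -- sum bound
  have hsum : ∑ t, g t ≤ (n : ℝ) - c * O := by
    have hsplit : ∑ t, g t
        = (n : ℝ) + ∑ t ∈ w, (Real.exp (-(L * a t i)) - 1) := by
      have hgt : ∀ t, g t = 1 + (if t ∈ w then Real.exp (-(L * a t i)) - 1 else 0) := by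
        intro t; rw [hg]; dsimp only; by_cases h : t ∈ w <;> simp [h]
      rw [Finset.sum_congr rfl fun t _ => hgt t, Finset.sum_add_distrib,
        Finset.sum_ite_mem, Finset.univ_inter]
      simp
    rw [hsplit]
    have : ∑ t ∈ w, (Real.exp (-(L * a t i)) - 1) ≤ ∑ t ∈ w, (-(a t i * c)) := by
      refine Finset.sum_le_sum fun t ht => ?_
      have := hpt t ht; linarith
    have h2 : ∑ t ∈ w, (-(a t i * c)) = -(c * O) := by
      rw [hO]; unfold occ
      rw [Finset.mul_sum, ← Finset.sum_neg_distrib]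
      exact Finset.sum_congr rfl fun t _ => by ring
    linarith [this, h2.le, h2.ge]
  -- MGF bound
  have hC0 : (0:ℝ) < (n.choose k : ℝ) := by exact_mod_cast Nat.choose_pos hkn
  have hmgf : ∑ S ∈ (Finset.univ : Finset (Fin n)).powersetCard k,
      Real.exp (-(L * occ a i (w ∩ S)))
      ≤ (n.choose k : ℝ) * Real.exp (-(μ * c)) := by
    have h1 : ∑ S ∈ (Finset.univ : Finset (Fin n)).powersetCard k,
        Real.exp (-(L * occ a i (w ∩ S)))
        = ∑ S ∈ (Finset.univ : Finset (Fin n)).powersetCard k, ∏ t ∈ S, g t :=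
      Finset.sum_congr rfl fun S _ => (hprod S).symm
    rw [h1]
    have h2 := maclaurin (Finset.univ : Finset (Fin n)) g k (fun t _ => hg0 t)
    have hcard : ((Finset.univ : Finset (Fin n)).card) = n := by simp
    rw [hcard] at h2
    refine h2.trans ?_
    have hb1 : (∑ t, g t) / (n:ℝ) ≤ Real.exp (-(c * O / n)) := by
      have : (∑ t, g t) / (n:ℝ) ≤ 1 - c * O / n := by
        rw [div_le_iff₀ hn0]; rw [sub_mul, div_mul_cancel₀ _ (ne_of_gt hn0)]
        linarith [hsum]
      refine this.trans ?_
      have := Real.add_one_le_exp (-(c * O / n))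
      linarith
    have hb2 : ((∑ t, g t) / (n:ℝ)) ^ k ≤ Real.exp (-(c * O / n)) ^ k :=
      pow_le_pow_left₀ (div_nonneg (Finset.sum_nonneg fun t _ => hg0 t) hn0.le) hb1 k
    have hb3 : Real.exp (-(c * O / n)) ^ k = Real.exp (-(μ * c)) := by
      rw [← Real.exp_nat_mul]
      congr 1
      rw [hk, hμdef]
      field_simp
    calc (n.choose k : ℝ) * ((∑ t, g t) / (n:ℝ)) ^ k
        ≤ (n.choose k : ℝ) * Real.exp (-(c * O / n)) ^ k :=
          mul_le_mul_of_nonneg_left hb2 hC0.le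
      _ = (n.choose k : ℝ) * Real.exp (-(μ * c)) := by rw [hb3]
  -- Markov step
  set P : Finset (Finset (Fin n)) := (Finset.univ : Finset (Fin n)).powersetCard k with hP
  set E : Finset (Finset (Fin n)) :=
    P.filter (fun S => (1 / ε) * occ a i (w ∩ S) ≤ (1 - ε) * B) with hE
  have hmark : (E.card : ℝ) * Real.exp (-(L * θ))
      ≤ ∑ S ∈ P, Real.exp (-(L * occ a i (w ∩ S))) := by
    have h1 : (E.card : ℝ) * Real.exp (-(L * θ))
        = ∑ _S ∈ E, Real.exp (-(L * θ)) := by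
      rw [Finset.sum_const, nsmul_eq_mul]
    rw [h1]
    have h2 : ∑ S ∈ E, Real.exp (-(L * θ))
        ≤ ∑ S ∈ E, Real.exp (-(L * occ a i (w ∩ S))) := by
      refine Finset.sum_le_sum fun S hS => ?_
      have hcond : (1 / ε) * occ a i (w ∩ S) ≤ (1 - ε) * B := (Finset.mem_filter.1 hS).2
      have hoccS : occ a i (w ∩ S) ≤ θ := by
        rw [hθdef]
        have := mul_le_mul_of_nonneg_left hcond hε0.le
        rw [← mul_assoc] at this
        rw [mul_one_div, div_self (ne_of_gt hε0), one_mul] at this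
        linarith
      exact Real.exp_le_exp.2 (by nlinarith [hL0])
    refine h2.trans ?_
    exact Finset.sum_le_sum_of_subset_of_nonneg (Finset.filter_subset _ _)
      (fun S _ _ => (Real.exp_pos _).le)
  -- combine
  have hcardP : (P.card : ℝ) = (n.choose k : ℝ) := by
    rw [hP, Finset.card_powersetCard]; simp
  have hcomb : (E.card : ℝ) ≤ (n.choose k : ℝ) * Real.exp (L * θ - μ * c) := by
    have h1 : (E.card : ℝ) * Real.exp (-(L * θ))
        ≤ (n.choose k : ℝ) * Real.exp (-(μ * c)) := hmark.trans hmgf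
    have h2 := mul_le_mul_of_nonneg_right h1 (Real.exp_pos (L * θ)).le
    calc (E.card : ℝ) = (E.card : ℝ) * Real.exp (-(L * θ)) * Real.exp (L * θ) := by
          rw [mul_assoc, ← Real.exp_add]; simp
      _ ≤ (n.choose k : ℝ) * Real.exp (-(μ * c)) * Real.exp (L * θ) := h2
      _ = (n.choose k : ℝ) * Real.exp (L * θ - μ * c) := by
          rw [mul_assoc, ← Real.exp_add]; ring_nf
  -- exponent estimate
  have hexpbound : L * θ - μ * c ≤ -(ε ^ 3 * B / 33) := by
    clear_value O μ θ L c
    have he3 : Real.exp (-L) ≤ 1 - L + L ^ 2 := by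
      have h1 : (0:ℝ) < 1 + L := by linarith
      have h2 : Real.exp (-L) ≤ 1 / (1 + L) := by
        rw [Real.exp_neg]
        rw [inv_eq_one_div]
        apply one_div_le_one_div_of_le h1
        linarith [Real.add_one_le_exp L]
      refine h2.trans ?_
      rw [div_le_iff₀ h1]
      nlinarith [hL0]
    have hcL : c ≥ L - L ^ 2 := by rw [hcdef]; linarith
    have hμc : μ * c ≥ μ * (L - L ^ 2) :=
      mul_le_mul_of_nonneg_left hcL hμ.le
    have hLval : L * θ - μ * (L - L ^ 2) = -((μ - θ) ^ 2 / (4 * μ)) := by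
      rw [hLdef]; field_simp; ring
    have hs : 0 ≤ O - (1 - ε/2) * B := sub_nonneg.2 hw
    have hkey : ε ^ 3 * B / 33 ≤ (μ - θ) ^ 2 / (4 * μ) := by
      rw [div_le_div_iff₀ (by norm_num) (by positivity)]
      rw [hμdef, hθdef]
      have g2 : 0 ≤ ε^3 * B * (O - (1 - ε/2) * B) := by positivity
      have g3 : 0 ≤ (1 - ε) * (ε^3 * B * (O - (1 - ε/2) * B)) :=
        mul_nonneg (by linarith) g2
      have g4 : 0 < ε^4 * B^2 := by positivity
      have g5 : 0 < ε^5 * B^2 := by positivity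
      nlinarith [sq_nonneg (ε * (O - (1 - ε/2) * B)), g2, g3, g4, g5]
    linarith [hμc, hLval, hkey]
  have hfinal : (E.card : ℝ) ≤ 2 * Real.exp (-(ε ^ 3 * B / 33)) * (P.card : ℝ) := by
    rw [hcardP]
    calc (E.card : ℝ) ≤ (n.choose k : ℝ) * Real.exp (L * θ - μ * c) := hcomb
      _ ≤ (n.choose k : ℝ) * Real.exp (-(ε ^ 3 * B / 33)) :=
          mul_le_mul_of_nonneg_left (Real.exp_le_exp.2 hexpbound) hC0.le
      _ ≤ 2 * Real.exp (-(ε ^ 3 * B / 33)) * (n.choose k : ℝ) := by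
          nlinarith [Real.exp_pos (-(ε ^ 3 * B / 33)), hC0]
  rw [div_le_iff₀ (by rw [hcardP]; exact hC0)]
  exact hfinal
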